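/- Let A be an n×n real symmetric matrix, B = diag(β_1,…,β_n) with β_i > 0, D = diag(δ_1,…,δ_n) with δ_i ∈ ℝ, and ε > 0. Suppose every eigenvalue of the symmetric matrix S = B^{1/2} A B^{1/2} − D is at most −ε, where B^{1/2} = diag(√β_i). Then for every x ∈ ℝⁿ and every t ≥ 0, ‖exp(t(BA − D)) x‖ ≤ α e^{−εt} ‖x‖ with α = √( (max_i β_i) / (min_i β_i) ), where exp denotes the matrix exponential and ‖·‖ the Euclidean norm. -/

import Mathlib

open RealInnerProductSpace

open Matrix

variable {n : ℕ}

lemma toEuclideanLin_mul_apply (M N : Matrix (Fin n) (Fin n) ℝ) (x : EuclideanSpace ℝ (Fin n)) :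
    Matrix.toEuclideanLin (M * N) x = Matrix.toEuclideanLin M (Matrix.toEuclideanLin N x) := by
  simp [Matrix.toEuclideanLin_apply, Matrix.mulVec_mulVec]

lemma toEuclideanLin_diagonal_apply (d : Fin n → ℝ) (x : EuclideanSpace ℝ (Fin n)) (i : Fin n) :
    Matrix.toEuclideanLin (Matrix.diagonal d) x i = d i * x i := by
  simp [Matrix.toEuclideanLin_apply, Matrix.mulVec_diagonal]

lemma norm_toEuclideanLin_diagonal_le (d : Fin n → ℝ) (c : ℝ) (hc : 0 ≤ c)
    (hd : ∀ i, |d i| ≤ c) (x : EuclideanSpace ℝ (Fin n)) :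
    ‖Matrix.toEuclideanLin (Matrix.diagonal d) x‖ ≤ c * ‖x‖ := by
  rw [EuclideanSpace.norm_eq, EuclideanSpace.norm_eq,
    ← Real.sqrt_sq hc, ← Real.sqrt_mul (sq_nonneg c)]
  apply Real.sqrt_le_sqrt
  rw [Finset.mul_sum]
  apply Finset.sum_le_sum
  intro i _
  rw [toEuclideanLin_diagonal_apply]
  simp only [Real.norm_eq_abs, abs_mul, mul_pow]
  exact mul_le_mul_of_nonneg_right
    (pow_le_pow_left₀ (abs_nonneg _) (hd i) 2) (sq_nonneg _)

lemma norm_toEuclideanLin_unitary (U : Matrix (Fin n) (Fin n) ℝ)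
    (hU : U ∈ Matrix.unitaryGroup (Fin n) ℝ) (x : EuclideanSpace ℝ (Fin n)) :
    ‖Matrix.toEuclideanLin U x‖ = ‖x‖ := by
  have key : (inner ℝ (Matrix.toEuclideanLin U x) (Matrix.toEuclideanLin U x) : ℝ) = inner ℝ x x := by
    rw [← LinearMap.adjoint_inner_left, ← Matrix.toEuclideanLin_conjTranspose_eq_adjoint,
      ← toEuclideanLin_mul_apply, show Uᴴ * U = 1 from Matrix.mem_unitaryGroup_iff'.mp hU]
    congr 1
    simp [Matrix.toEuclideanLin_apply, Matrix.one_mulVec]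
  rw [real_inner_self_eq_norm_sq, real_inner_self_eq_norm_sq] at key
  calc ‖Matrix.toEuclideanLin U x‖ = √(‖Matrix.toEuclideanLin U x‖ ^ 2) :=
        (Real.sqrt_sq (norm_nonneg _)).symm
    _ = √(‖x‖ ^ 2) := by rw [key]
    _ = ‖x‖ := Real.sqrt_sq (norm_nonneg _)



/-- **Exponential decay for `BA - D` via its symmetrization.**
For `A` real symmetric, `B = diag(β)` with positive entries, `D = diag(δ)`, and
`ε > 0`: if every eigenvalue of the symmetric matrix `S = B^{1/2} A B^{1/2} - D`
is at most `-ε`, then `‖exp(t(BA - D)) x‖ ≤ α e^{-εt} ‖x‖` for all `x` and `t ≥ 0`,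
with `α = √((maxᵢ βᵢ)/(minᵢ βᵢ))` and `‖·‖` the Euclidean norm. -/
theorem exp_BA_sub_D_decay
    {n : ℕ} [NeZero n] (A : Matrix (Fin n) (Fin n) ℝ) (hA : A.IsSymm)
    (β δ : Fin n → ℝ) (hβ : ∀ i, 0 < β i) (ε : ℝ) (hε : 0 < ε)
    (hS : (Matrix.diagonal (fun i => Real.sqrt (β i)) * A *
            Matrix.diagonal (fun i => Real.sqrt (β i)) -
          Matrix.diagonal δ).IsHermitian)
    (hspec : ∀ i, hS.eigenvalues i ≤ -ε) :
    ∀ (x : EuclideanSpace ℝ (Fin n)) (t : ℝ), 0 ≤ t →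
      ‖Matrix.toEuclideanLin
          (NormedSpace.exp (t • (Matrix.diagonal β * A - Matrix.diagonal δ))) x‖
        ≤ Real.sqrt ((Finset.univ.sup' Finset.univ_nonempty β) /
            (Finset.univ.inf' Finset.univ_nonempty β)) *
          Real.exp (-ε * t) * ‖x‖ := by
  intro x t ht
  have hsqrt_pos : ∀ i, 0 < Real.sqrt (β i) := fun i => Real.sqrt_pos.mpr (hβ i)
  set P := Matrix.diagonal (fun i => Real.sqrt (β i)) with hPdef
  set Q := Matrix.diagonal (fun i => (Real.sqrt (β i))⁻¹) with hQdef
  have hPQ : P * Q = 1 := by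
    rw [hPdef, hQdef, Matrix.diagonal_mul_diagonal]
    rw [show (fun i => Real.sqrt (β i) * (Real.sqrt (β i))⁻¹) = fun _ => (1:ℝ) from
      funext fun i => mul_inv_cancel₀ (hsqrt_pos i).ne']
    exact Matrix.diagonal_one
  have hQP : Q * P = 1 := by
    rw [hPdef, hQdef, Matrix.diagonal_mul_diagonal]
    rw [show (fun i => (Real.sqrt (β i))⁻¹ * Real.sqrt (β i)) = fun _ => (1:ℝ) from
      funext fun i => inv_mul_cancel₀ (hsqrt_pos i).ne']
    exact Matrix.diagonal_one
  have hPunit : IsUnit P := ⟨⟨P, Q, hPQ, hQP⟩, rfl⟩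
  have hPinv : P⁻¹ = Q := Matrix.inv_eq_right_inv hPQ
  set S := P * A * P - Matrix.diagonal δ with hSdef
  -- conjugation identity
  have hPP : P * P = Matrix.diagonal β := by
    rw [hPdef, Matrix.diagonal_mul_diagonal]
    exact congrArg Matrix.diagonal (funext fun i => Real.mul_self_sqrt (hβ i).le)
  have hPDQ : P * Matrix.diagonal δ * Q = Matrix.diagonal δ := by
    rw [hPdef, hQdef, Matrix.diagonal_mul_diagonal, Matrix.diagonal_mul_diagonal]
    refine congrArg Matrix.diagonal (funext fun i => ?_)
    rw [mul_comm (Real.sqrt (β i)) (δ i), mul_assoc, mul_inv_cancel₀ (hsqrt_pos i).ne', mul_one]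
  have hPSQ : P * S * Q = Matrix.diagonal β * A - Matrix.diagonal δ := by
    rw [hSdef, mul_sub, sub_mul, hPDQ]
    congr 1
    calc P * (P * A * P) * Q = (P * P) * A * (P * Q) := by noncomm_ring
      _ = Matrix.diagonal β * A * 1 := by rw [hPP, hPQ]
      _ = Matrix.diagonal β * A := by rw [mul_one]
  have hconj : t • (Matrix.diagonal β * A - Matrix.diagonal δ) = P * (t • S) * P⁻¹ := by
    rw [hPinv, ← hPSQ, Matrix.mul_smul, Matrix.smul_mul]
  -- spectral decomposition of S
  set U : Matrix (Fin n) (Fin n) ℝ := (hS.eigenvectorUnitary : Matrix (Fin n) (Fin n) ℝ)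
    with hUdef
  have hUmem : U ∈ Matrix.unitaryGroup (Fin n) ℝ := hS.eigenvectorUnitary.2
  have hUinv : U⁻¹ = star U :=
    Matrix.inv_eq_left_inv (Matrix.mem_unitaryGroup_iff'.mp hUmem)
  have hUunit : IsUnit U := ⟨⟨U, star U, Matrix.mem_unitaryGroup_iff.mp hUmem,
    Matrix.mem_unitaryGroup_iff'.mp hUmem⟩, rfl⟩
  set μ := hS.eigenvalues with hμdef
  have hspecS : S = U * Matrix.diagonal μ * star U := by
    have := hS.spectral_theorem
    simpa using this
  have hdiagsmul : t • Matrix.diagonal μ = Matrix.diagonal (fun i => t * μ i) := by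
    rw [← Matrix.diagonal_smul]
    rfl
  have htS : t • S = U * Matrix.diagonal (fun i => t * μ i) * U⁻¹ := by
    rw [hUinv, hspecS, ← hdiagsmul, mul_smul_comm, smul_mul_assoc]
  -- exponential
  set Dg := Matrix.diagonal (fun i => Real.exp (t * μ i)) with hDgdef
  have hexpdiag : NormedSpace.exp (Matrix.diagonal (fun i => t * μ i)) = Dg := by
    rw [Matrix.exp_diagonal, hDgdef]
    exact congrArg Matrix.diagonal (funext fun i =>
      (Pi.coe_exp _ i).trans (congrFun Real.exp_eq_exp_ℝ _).symm)
  have hexp : NormedSpace.exp (t • (Matrix.diagonal β * A - Matrix.diagonal δ))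
      = P * (U * (Dg * (star U * Q))) := by
    rw [hconj, Matrix.exp_conj P (t • S) hPunit, htS,
      Matrix.exp_conj U _ hUunit, hexpdiag, hUinv, hPinv]
    noncomm_ring
  rw [hexp, toEuclideanLin_mul_apply, toEuclideanLin_mul_apply, toEuclideanLin_mul_apply,
    toEuclideanLin_mul_apply]
  -- bounds
  set bmax := Finset.univ.sup' Finset.univ_nonempty β with hbmax
  set bmin := Finset.univ.inf' Finset.univ_nonempty β with hbmin
  have hbmin_pos : 0 < bmin := by
    rw [hbmin]
    apply (Finset.lt_inf'_iff _).mpr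
    intro i _
    exact hβ i
  have hbmax_pos : 0 < bmax := by
    obtain ⟨i0⟩ := Finset.univ_nonempty (α := Fin n)
    calc (0:ℝ) < bmin := hbmin_pos
      _ ≤ β i0 := Finset.inf'_le _ (Finset.mem_univ i0)
      _ ≤ bmax := Finset.le_sup' _ (Finset.mem_univ i0)
  set y4 := Matrix.toEuclideanLin Q x
  set y3 := Matrix.toEuclideanLin (star U) y4
  set y2 := Matrix.toEuclideanLin Dg y3
  have b1 : ‖Matrix.toEuclideanLin U y2‖ = ‖y2‖ := norm_toEuclideanLin_unitary U hUmem y2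
  have b2 : ‖y2‖ ≤ Real.exp (-ε * t) * ‖y3‖ := by
    apply norm_toEuclideanLin_diagonal_le _ _ (Real.exp_nonneg _)
    intro i
    rw [abs_of_nonneg (Real.exp_nonneg _)]
    apply Real.exp_le_exp.mpr
    calc t * μ i ≤ t * (-ε) := mul_le_mul_of_nonneg_left (hspec i) ht
      _ = -ε * t := by ring
  have b3 : ‖y3‖ = ‖y4‖ := norm_toEuclideanLin_unitary (star U) (Unitary.star_mem hUmem) y4
  have b4 : ‖y4‖ ≤ (Real.sqrt bmin)⁻¹ * ‖x‖ := by
    apply norm_toEuclideanLin_diagonal_le _ _ (by positivity)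
    intro i
    rw [abs_of_nonneg (by positivity)]
    apply inv_anti₀ (Real.sqrt_pos.mpr hbmin_pos)
    exact Real.sqrt_le_sqrt (Finset.inf'_le _ (Finset.mem_univ i))
  have b0 : ‖Matrix.toEuclideanLin P (Matrix.toEuclideanLin U y2)‖
      ≤ Real.sqrt bmax * ‖Matrix.toEuclideanLin U y2‖ := by
    apply norm_toEuclideanLin_diagonal_le _ _ (Real.sqrt_nonneg _)
    intro i
    rw [abs_of_nonneg (Real.sqrt_nonneg _)]
    exact Real.sqrt_le_sqrt (Finset.le_sup' _ (Finset.mem_univ i))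
  have hfinal : Real.sqrt (bmax / bmin) = Real.sqrt bmax * (Real.sqrt bmin)⁻¹ := by
    rw [Real.sqrt_div hbmax_pos.le, div_eq_mul_inv]
  calc ‖Matrix.toEuclideanLin P (Matrix.toEuclideanLin U y2)‖
      ≤ Real.sqrt bmax * ‖Matrix.toEuclideanLin U y2‖ := b0
    _ = Real.sqrt bmax * ‖y2‖ := by rw [b1]
    _ ≤ Real.sqrt bmax * (Real.exp (-ε * t) * ‖y3‖) := by
        exact mul_le_mul_of_nonneg_left b2 (Real.sqrt_nonneg _)
    _ = Real.sqrt bmax * (Real.exp (-ε * t) * ‖y4‖) := by rw [b3]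
    _ ≤ Real.sqrt bmax * (Real.exp (-ε * t) * ((Real.sqrt bmin)⁻¹ * ‖x‖)) := by
        apply mul_le_mul_of_nonneg_left _ (Real.sqrt_nonneg _)
        exact mul_le_mul_of_nonneg_left b4 (Real.exp_nonneg _)
    _ = Real.sqrt (bmax / bmin) * Real.exp (-ε * t) * ‖x‖ := by rw [hfinal]; ring
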